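/- For any two probability density functions f, g on [0,1], |f̄ − ḡ| ≤ √(4ḡ + D△(f‖g)) · √(D△(f‖g)), where f̄, ḡ are the means and D△ is the triangular discrimination. -/

import Mathlib

open MeasureTheory

/-- Inequality (△₂): for densities `f, g` on `[0,1]` w.r.t. a dominating measure `μ`,
`|f̄ − ḡ| ≤ √(4ḡ + D△(f‖g)) · √(D△(f‖g))`. -/
theorem tri_disc_ineq_two (μ : Measure ℝ) (f g : ℝ → ℝ)
    (hsupp : μ (Set.Icc (0:ℝ) 1)ᶜ = 0)
    (hf0 : ∀ y, 0 ≤ f y) (hg0 : ∀ y, 0 ≤ g y)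
    (hfi : Integrable f μ) (hgi : Integrable g μ)
    (hf1 : ∫ y, f y ∂μ = 1) (hg1 : ∫ y, g y ∂μ = 1)
    (hmf : Integrable (fun y => y * f y) μ) (hmg : Integrable (fun y => y * g y) μ)
    (hD : Integrable (fun y => (f y - g y) ^ 2 / (f y + g y)) μ) :
    |(∫ y, y * f y ∂μ) - ∫ y, y * g y ∂μ| ≤
      Real.sqrt (4 * (∫ y, y * g y ∂μ) + ∫ y, (f y - g y) ^ 2 / (f y + g y) ∂μ) *
        Real.sqrt (∫ y, (f y - g y) ^ 2 / (f y + g y) ∂μ) := by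
  have hae : ∀ᵐ y ∂μ, y ∈ Set.Icc (0:ℝ) 1 := by
    exact MeasureTheory.mem_ae_iff.mpr hsupp
  set Fm := ∫ y, y * f y ∂μ with hFm
  set Gm := ∫ y, y * g y ∂μ with hGm
  set Dv := ∫ y, (f y - g y) ^ 2 / (f y + g y) ∂μ with hDv
  set X := |Fm - Gm| with hX
  have hfg : Integrable (fun y => f y + g y) μ := hfi.add hgi
  have hA_int : Integrable (fun y => y ^ 2 * (f y + g y)) μ := by
    apply hfg.mono'
    · exact ((measurable_id.pow_const 2).aestronglyMeasurable.mul hfg.aestronglyMeasurable)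
    · filter_upwards [hae] with y hy
      rw [Real.norm_eq_abs,
        abs_of_nonneg (mul_nonneg (sq_nonneg y) (add_nonneg (hf0 y) (hg0 y)))]
      nlinarith [mul_nonneg (add_nonneg (hf0 y) (hg0 y))
        (by nlinarith [hy.1, hy.2] : (0:ℝ) ≤ 1 - y ^ 2)]
  have hY_int : Integrable (fun y => y * (f y - g y)) μ := by
    simpa [mul_sub, Pi.sub_def] using hmf.sub hmg
  have hYG_int : Integrable (fun y => y * (f y + g y)) μ := by
    simpa [mul_add, Pi.add_def] using hmf.add hmg
  set A := ∫ y, y ^ 2 * (f y + g y) ∂μ with hA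
  have hA_le : A ≤ Fm + Gm := by
    have h1 : (∫ y, y * (f y + g y) ∂μ) = Fm + Gm := by
      simp [mul_add, integral_add hmf hmg, hFm, hGm]
    rw [← h1]
    refine integral_mono_ae hA_int hYG_int ?_
    filter_upwards [hae] with y hy
    nlinarith [mul_nonneg (mul_nonneg hy.1 (sub_nonneg.2 hy.2)) (add_nonneg (hf0 y) (hg0 y))]
  have hD0 : 0 ≤ Dv := by
    apply integral_nonneg
    intro y
    exact div_nonneg (sq_nonneg _) (add_nonneg (hf0 y) (hg0 y))
  have hG0 : 0 ≤ Gm := by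
    apply integral_nonneg_of_ae
    filter_upwards [hae] with y hy
    exact mul_nonneg hy.1 (hg0 y)
  -- key estimate for every t > 0
  have key : ∀ t : ℝ, 0 < t → X ≤ (t * A + Dv / t) / 2 := by
    intro t ht
    have hXeq : Fm - Gm = ∫ y, y * (f y - g y) ∂μ := by
      rw [hFm, hGm, ← integral_sub hmf hmg]
      congr 1; funext y; ring
    have habs : X ≤ ∫ y, |y * (f y - g y)| ∂μ := by
      rw [hX, hXeq]
      calc |∫ y, y * (f y - g y) ∂μ| ≤ ‖∫ y, y * (f y - g y) ∂μ‖ := le_of_eq (Real.norm_eq_abs _).symm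
        _ ≤ ∫ y, ‖y * (f y - g y)‖ ∂μ := norm_integral_le_integral_norm _
        _ = ∫ y, |y * (f y - g y)| ∂μ := by simp only [Real.norm_eq_abs]
    have hb_int : Integrable
        (fun y => (t * (y ^ 2 * (f y + g y)) + (f y - g y) ^ 2 / (f y + g y) / t) / 2) μ :=
      ((hA_int.const_mul t).add (hD.div_const t)).div_const 2
    have hmono : (∫ y, |y * (f y - g y)| ∂μ) ≤
        ∫ y, (t * (y ^ 2 * (f y + g y)) + (f y - g y) ^ 2 / (f y + g y) / t) / 2 ∂μ := by
      refine integral_mono_ae hY_int.abs hb_int ?_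
      filter_upwards [hae] with y hy
      rcases eq_or_lt_of_le (add_nonneg (hf0 y) (hg0 y)) with hs | hs
      · have hf' : f y = 0 := by nlinarith [hf0 y, hg0 y]
        have hg' : g y = 0 := by nlinarith [hf0 y, hg0 y]
        simp [hf', hg']
      · have h2 : (y * |f y - g y| * 2 - t * (y ^ 2 * (f y + g y))) * ((f y + g y) * t)
            ≤ (f y - g y) ^ 2 := by
          nlinarith [sq_nonneg (t * y * (f y + g y) - |f y - g y|), sq_abs (f y - g y),
            abs_nonneg (f y - g y), hs, ht, hy.1, hy.2]
        have h3 : y * |f y - g y| * 2 - t * (y ^ 2 * (f y + g y))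
            ≤ (f y - g y) ^ 2 / ((f y + g y) * t) :=
          (le_div_iff₀ (mul_pos hs ht)).mpr h2
        rw [abs_mul, abs_of_nonneg hy.1, div_div, le_div_iff₀ (by norm_num : (0:ℝ) < 2)]
        linarith
    have hival : (∫ y, (t * (y ^ 2 * (f y + g y)) + (f y - g y) ^ 2 / (f y + g y) / t) / 2 ∂μ)
        = (t * A + Dv / t) / 2 := by
      rw [integral_div, integral_add (hA_int.const_mul t) (hD.div_const t),
        integral_const_mul, integral_div]
    calc X ≤ _ := habs
      _ ≤ _ := hmono
      _ = _ := hival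
  -- t = 1 gives Fm ≤ 3 Gm + Dv
  have hF3 : Fm ≤ 3 * Gm + Dv := by
    have h1 := key 1 one_pos
    have h2 : Fm - Gm ≤ X := le_abs_self _
    simp only [one_mul, div_one] at h1
    linarith
  set S := 4 * Gm + Dv with hS
  have hS0 : 0 ≤ S := by rw [hS]; linarith
  have hAS : A ≤ S := by linarith
  have hq : ∀ x : ℝ, 0 ≤ S * (x * x) + (-(2 * X)) * x + Dv := by
    intro x
    rcases le_or_gt x 0 with hx | hx
    · nlinarith [mul_nonneg hS0 (mul_self_nonneg x), abs_nonneg (Fm - Gm),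
        mul_nonneg (abs_nonneg (Fm - Gm)) (neg_nonneg.2 hx)]
    · have h := key x hx
      have hc : Dv / x * x = Dv := div_mul_cancel₀ _ (ne_of_gt hx)
      nlinarith [h, hc, hx, mul_le_mul_of_nonneg_left hAS (le_of_lt (mul_pos hx hx))]
  have hdisc := discrim_le_zero hq
  rw [discrim] at hdisc
  have hX2 : X ^ 2 ≤ S * Dv := by nlinarith [hdisc]
  calc X = Real.sqrt (X ^ 2) := (Real.sqrt_sq (abs_nonneg _)).symm
    _ ≤ Real.sqrt (S * Dv) := Real.sqrt_le_sqrt hX2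
    _ = Real.sqrt S * Real.sqrt Dv := Real.sqrt_mul hS0 _
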